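/- arXiv:1704.00997 — 2 statements merged into one kernel-verified Lean document; each statement's English description precedes it below -/
import Mathlib

section
/- Let b ∈ I. Then (b) is a reduction of I if and only if b/a is an invertible element of S. When this is the case, S = R[I/b] and r_Q(I) = r_{(b)}(I). -/
open IsLocalRing Polynomial

set_option maxHeartbeats 1000000
set_option synthInstance.maxHeartbeats 400000

noncomputable section

/-- The (ℕ-valued) length `ℓ_R(M)` of an `R`-module `M`, defined as the Krull dimension of
its lattice of submodules (with junk value `0` if the length is infinite). -/
noncomputable def flen (R M : Type*) [Ring R] [AddCommGroup M] [Module R M] : ℕ :=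
  (WithBot.unbotD 0 (Order.krullDim (Submodule R M))).toNat

/-- The quotient module `Y/X` for submodules `X ⊆ Y` of a module. -/
noncomputable abbrev quotMod {R M : Type*} [CommRing R] [AddCommGroup M] [Module R M]
    (Y X : Submodule R M) :=
  ↥Y ⧸ X.comap Y.subtype

/-- `colen Y X = ℓ_R(Y/X)`. -/
noncomputable def colen {R M : Type*} [CommRing R] [AddCommGroup M] [Module R M]
    (Y X : Submodule R M) : ℕ :=
  flen R (quotMod Y X)

/-- The fractional ideal `K = I/a = {x/a : x ∈ I}` inside the total quotient ring of `R`. -/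
noncomputable def Kfrac (R : Type*) [CommRing R] (I : Ideal R) (a : R) :
    Submodule R (FractionRing R) :=
  Submodule.span R {z : FractionRing R |
    ∃ x ∈ I, z * algebraMap R (FractionRing R) a = algebraMap R (FractionRing R) x}

/-- The ring `S = R[K]`. -/
noncomputable def Sring (R : Type*) [CommRing R] (I : Ideal R) (a : R) :
    Subalgebra R (FractionRing R) :=
  Algebra.adjoin R (Kfrac R I a : Set (FractionRing R))

/-- `S = R[K]` as an `R`-submodule of the total quotient ring. -/
noncomputable def Smod (R : Type*) [CommRing R] (I : Ideal R) (a : R) :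
    Submodule R (FractionRing R) :=
  Subalgebra.toSubmodule (Sring R I a)

/-- The conductor `𝔠 = R : S`, as a submodule of the total quotient ring. -/
noncomputable def condS (R : Type*) [CommRing R] (I : Ideal R) (a : R) :
    Submodule R (FractionRing R) :=
  (1 : Submodule R (FractionRing R)) / Smod R I a

/-- The conductor `𝔠 = R : S`, as an ideal of `R`. -/
noncomputable def condIdeal (R : Type*) [CommRing R] (I : Ideal R) (a : R) : Ideal R :=
  (condS R I a).comap (Algebra.linearMap R (FractionRing R))

/-- The image of the maximal ideal `m` in the total quotient ring. -/
noncomputable def mSub (R : Type*) [CommRing R] [IsLocalRing R] :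
    Submodule R (FractionRing R) :=
  Submodule.map (Algebra.linearMap R (FractionRing R)) (maximalIdeal R)

/-- A fractional ideal `K` is a canonical module of `R` (the Herzog–Kunz duality
characterization): `K : (K : J) = J` for every finitely generated regular fractional ideal. -/
def IsCanonicalSub (R : Type*) [CommRing R] (K : Submodule R (FractionRing R)) : Prop :=
  ∀ J : Submodule R (FractionRing R), J.FG → (∃ z ∈ J, IsUnit z) → K / (K / J) = J

/-- The setting: `I ≠ R` is a canonical ideal of `R` (i.e. `I ≅ K_R`, expressed via the
Herzog–Kunz duality property of `K = I/a`), containing the parameter ideal `Q = (a)`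
(`a` a non-zerodivisor) as a reduction. -/
structure CanSetting (R : Type*) [CommRing R] (I : Ideal R) (a : R) : Prop where
  ne_top : I ≠ ⊤
  mem : a ∈ I
  nzd : a ∈ nonZeroDivisors R
  red : ∃ n : ℕ, I ^ (n + 1) = Ideal.span {a} * I ^ n
  canonical : IsCanonicalSub R (Kfrac R I a)

/-- `μ_R(M)`: the minimal number of generators `ℓ_R(M/mM)`. -/
noncomputable def muR (R : Type*) [CommRing R] [IsLocalRing R]
    (M : Type*) [AddCommGroup M] [Module R M] : ℕ :=
  flen R (M ⧸ (maximalIdeal R • ⊤ : Submodule R M))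

/-- The Sally module `S_Q(I)` of `I` with respect to `Q = (a)` has rank `r`, i.e. the
eventually constant value of `ℓ_R(I^{n+1}/Q^n I) = ℓ_R([S_Q(I)]_n)` equals `r`. -/
def SallyRankIs (R : Type*) [CommRing R] (I : Ideal R) (a : R) (r : ℕ) : Prop :=
  ∃ N : ℕ, ∀ n ≥ N, colen (I ^ (n + 1)) (Ideal.span {a} ^ n * I) = r

/-- `e0` and `e1` are the Hilbert coefficients of the `m`-primary ideal `I`:
`ℓ_R(R/I^{n+1}) = e0·(n+1) - e1` for all large `n`. -/
def IsHilbCoeffs (R : Type*) [CommRing R] (I : Ideal R) (e0 e1 : ℤ) : Prop :=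
  ∃ N : ℕ, ∀ n ≥ N, (flen R (R ⧸ I ^ (n + 1)) : ℤ) = e0 * (n + 1) - e1

/-- The multiplicity `e(A) = e_m^0(A)` of a one-dimensional local ring equals `e`. -/
def RingMultIs (A : Type*) [CommRing A] [IsLocalRing A] (e : ℕ) : Prop :=
  ∃ c : ℤ, ∃ N : ℕ, ∀ n ≥ N,
    (flen A (A ⧸ maximalIdeal A ^ (n + 1)) : ℤ) = (e : ℤ) * (n + 1) - c

/-- `R` is an almost Gorenstein local ring (for the fixed canonical setting): there is an
exact sequence `0 → R → K_R → C → 0` with `mC = 0`; equivalently `m·K ⊆ R`. -/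
def IsAGLSetting (R : Type*) [CommRing R] [IsLocalRing R] (I : Ideal R) (a : R) : Prop :=
  maximalIdeal R • Kfrac R I a ≤ 1

/-- A one-dimensional Cohen-Macaulay local ring is almost Gorenstein. -/
def IsAGLRing (A : Type*) [CommRing A] [IsLocalRing A] : Prop :=
  ∃ (I : Ideal A) (a : A), CanSetting A I a ∧ maximalIdeal A • Kfrac A I a ≤ 1

/-- A one-dimensional local ring is Gorenstein: a fractional canonical ideal equals `R`. -/
def IsGorLoc (A : Type*) [CommRing A] [IsLocalRing A] : Prop :=
  ∃ (I : Ideal A) (a : A), CanSetting A I a ∧ Kfrac A I a = 1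

/-- A one-dimensional ring is Gorenstein: all localizations at maximal ideals are. -/
def IsGorRing (A : Type*) [CommRing A] : Prop :=
  ∀ P : Ideal A, ∀ hP : P.IsMaximal, by
    haveI := hP.isPrime
    exact IsGorLoc (Localization.AtPrime P)

/-- `R` is a `2`-almost Gorenstein local ring: `K² = K³` and `ℓ_R(K²/K) = 2`. -/
def IsTwoAGLK (R : Type*) [CommRing R] (I : Ideal R) (a : R) : Prop :=
  Kfrac R I a ^ 2 = Kfrac R I a ^ 3 ∧ colen (Kfrac R I a ^ 2) (Kfrac R I a) = 2

/-- A ring is a `2`-almost Gorenstein local ring: the Sally module of a canonical ideal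
with respect to a principal reduction has rank `2`. -/
def IsTwoAGLRing (A : Type*) [CommRing A] : Prop :=
  ∃ (I : Ideal A) (a : A), CanSetting A I a ∧ SallyRankIs A I a 2

end

section RedAuxHelpers

noncomputable def sps (R : Type*) [CommRing R] (x : FractionRing R) :
    Submodule R (FractionRing R) := Submodule.span R {x}

noncomputable def Jmod (R : Type*) [CommRing R] (I : Ideal R) : Submodule R (FractionRing R) :=
  Submodule.map (Algebra.linearMap R (FractionRing R)) I

variable {R : Type*} [CommRing R]

lemma sps_mul (x y : FractionRing R) : sps R x * sps R y = sps R (x * y) := by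
  unfold sps
  rw [Submodule.span_mul_span, Set.singleton_mul_singleton]

lemma sps_one : sps R (1 : FractionRing R) = 1 := Submodule.one_eq_span.symm

lemma sps_pow (x : FractionRing R) (n : ℕ) : (sps R x) ^ n = sps R (x ^ n) := by
  induction n with
  | zero => rw [pow_zero, pow_zero, sps_one]
  | succ n ih => rw [pow_succ, ih, sps_mul, ← pow_succ]

lemma sps_cancel {x w : FractionRing R} (h : x * w = 1) {M N : Submodule R (FractionRing R)}
    (hMN : sps R x * M = sps R x * N) : M = N := by
  have h2 : sps R w * (sps R x * M) = sps R w * (sps R x * N) := by rw [hMN]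
  rwa [← mul_assoc, ← mul_assoc, sps_mul, mul_comm w x, h, sps_one, one_mul, one_mul] at h2

lemma mem_sps_mul {x y : FractionRing R} {M : Submodule R (FractionRing R)} :
    y ∈ sps R x * M ↔ ∃ z ∈ M, x * z = y := Submodule.mem_span_singleton_mul

lemma one_mem_Kfrac {I : Ideal R} {a : R} (ha : a ∈ I) : (1 : FractionRing R) ∈ Kfrac R I a :=
  Submodule.subset_span ⟨a, ha, one_mul _⟩

lemma Jmod_pow (I : Ideal R) (n : ℕ) : Jmod R (I ^ n) = (Jmod R I) ^ n := by
  have h : Algebra.linearMap R (FractionRing R) = (Algebra.ofId R (FractionRing R)).toLinearMap :=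
    rfl
  unfold Jmod
  rw [h, Submodule.map_pow]

lemma Jmod_mul (I J : Ideal R) : Jmod R (I * J) = Jmod R I * Jmod R J := by
  have h : Algebra.linearMap R (FractionRing R) = (Algebra.ofId R (FractionRing R)).toLinearMap :=
    rfl
  unfold Jmod
  rw [h, Submodule.map_mul]

lemma Jmod_span (c : R) :
    Jmod R (Ideal.span {c}) = sps R (algebraMap R (FractionRing R) c) := by
  unfold Jmod sps
  rw [Ideal.span, Submodule.map_span, Set.image_singleton, Algebra.linearMap_apply]

lemma Jmod_injective : Function.Injective (Jmod R) :=
  Submodule.map_injective_of_injective (IsFractionRing.injective R (FractionRing R))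

lemma Kfrac_eq {I : Ideal R} {a : R} {s : FractionRing R}
    (hs : s * algebraMap R (FractionRing R) a = 1) :
    Kfrac R I a = sps R s * Jmod R I := by
  set φ := algebraMap R (FractionRing R) with hφ
  apply le_antisymm
  · rw [Kfrac, Submodule.span_le]
    rintro z ⟨x, hx, hz⟩
    rw [SetLike.mem_coe, mem_sps_mul]
    refine ⟨φ x, ⟨x, hx, rfl⟩, ?_⟩
    rw [← hz, mul_comm z (φ a), ← mul_assoc, hs, one_mul]
  · rw [sps]
    apply Submodule.mul_le.mpr
    intro u hu y hy
    obtain ⟨r, rfl⟩ := Submodule.mem_span_singleton.mp hu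
    obtain ⟨x, hx, rfl⟩ := hy
    rw [smul_mul_assoc]
    apply Submodule.smul_mem
    apply Submodule.subset_span
    refine ⟨x, hx, ?_⟩
    show s * φ x * φ a = φ x
    rw [mul_right_comm, hs, one_mul]

open Submodule

variable {R : Type*} [CommRing R]

lemma cond_iff (I : Ideal R) {a : R} {s : FractionRing R}
    (hs : algebraMap R (FractionRing R) a * s = 1) (c : R) (n : ℕ) :
    I ^ (n + 1) = Ideal.span {c} * I ^ n ↔
      Kfrac R I a ^ (n + 1) =
        sps R (algebraMap R (FractionRing R) c * s) * Kfrac R I a ^ n := by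
  set φ := algebraMap R (FractionRing R) with hφ
  have hs' : s * φ a = 1 := by rw [mul_comm]; exact hs
  have hK : Kfrac R I a = sps R s * Jmod R I := Kfrac_eq hs'
  have hKpow : ∀ m : ℕ, Kfrac R I a ^ m = sps R (s ^ m) * (Jmod R I) ^ m := by
    intro m
    rw [hK, mul_pow, sps_pow]
  have hiff1 : I ^ (n + 1) = Ideal.span {c} * I ^ n ↔
      (Jmod R I) ^ (n + 1) = sps R (φ c) * (Jmod R I) ^ n := by
    constructor
    · intro h
      have h2 := congrArg (Jmod R) h
      rwa [Jmod_pow, Jmod_mul, Jmod_span, Jmod_pow] at h2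
    · intro h
      apply Jmod_injective
      rw [Jmod_pow, Jmod_mul, Jmod_span, Jmod_pow, h]
  have hiff2 : Kfrac R I a ^ (n + 1) = sps R (φ c * s) * Kfrac R I a ^ n ↔
      (Jmod R I) ^ (n + 1) = sps R (φ c) * (Jmod R I) ^ n := by
    rw [hKpow, hKpow, ← mul_assoc, sps_mul,
      show φ c * s * s ^ n = s ^ (n + 1) * φ c by ring, ← sps_mul, mul_assoc]
    constructor
    · intro h
      refine sps_cancel (x := s ^ (n + 1)) (w := φ a ^ (n + 1)) ?_ h
      rw [← mul_pow, mul_comm, hs, one_pow]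
    · intro h
      rw [h]
  exact hiff1.trans hiff2.symm

lemma pow_mono {K : Submodule R (FractionRing R)} (h1 : (1 : FractionRing R) ∈ K) :
    Monotone fun n => K ^ n := by
  apply monotone_nat_of_le_succ
  intro n x hx
  rw [pow_succ]
  exact mul_one x ▸ Submodule.mul_mem_mul hx h1

lemma pow_stab {K : Submodule R (FractionRing R)} {m : ℕ} (hm : K ^ (m + 1) = K ^ m) :
    ∀ n, K ^ (m + n) = K ^ m := by
  intro n
  induction n with
  | zero => rfl
  | succ n ih => rw [← add_assoc, pow_succ, ih, ← pow_succ, hm]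

lemma iSup_pow_eq {K : Submodule R (FractionRing R)} {m : ℕ}
    (h1 : (1 : FractionRing R) ∈ K) (hm : K ^ (m + 1) = K ^ m) :
    (⨆ n, K ^ n) = K ^ m := by
  apply le_antisymm
  · apply iSup_le
    intro n
    rcases le_or_gt n m with h | h
    · exact pow_mono h1 h
    · have h2 := pow_stab hm (n - m)
      rw [Nat.add_sub_cancel' h.le] at h2
      exact h2.le
  · exact le_iSup (fun n => K ^ n) m

lemma Smod_eq_iSup (I : Ideal R) (a : R) (ha : a ∈ I) :
    Subalgebra.toSubmodule (Sring R I a) = ⨆ n, Kfrac R I a ^ n := by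
  set K := Kfrac R I a with hKdef
  have h1 : (1 : FractionRing R) ∈ K := one_mem_Kfrac ha
  have hdir : Directed (· ≤ ·) fun n => K ^ n := (pow_mono h1).directed_le
  have h1sup : (1 : FractionRing R) ∈ ⨆ n, K ^ n :=
    le_iSup (fun n => K ^ n) 1 (by show _ ∈ K ^ 1; rw [pow_one]; exact h1)
  have hmul : ∀ x y : FractionRing R, x ∈ (⨆ n, K ^ n) → y ∈ (⨆ n, K ^ n) →
      x * y ∈ ⨆ n, K ^ n := by
    intro x y hx hy
    obtain ⟨i, hi⟩ := (Submodule.mem_iSup_of_directed _ hdir).mp hx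
    obtain ⟨j, hj⟩ := (Submodule.mem_iSup_of_directed _ hdir).mp hy
    refine le_iSup (fun n => K ^ n) (i + j) ?_
    show _ ∈ K ^ (i + j)
    rw [pow_add]
    exact Submodule.mul_mem_mul hi hj
  set T : Subalgebra R (FractionRing R) := Submodule.toSubalgebra (⨆ n, K ^ n) h1sup hmul
    with hT
  apply le_antisymm
  · have hle : Sring R I a ≤ T := by
      apply Algebra.adjoin_le
      intro x hx
      exact le_iSup (fun n => K ^ n) 1 (by show _ ∈ K ^ 1; rw [pow_one]; exact hx)
    exact hle
  · apply iSup_le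
    intro n
    induction n with
    | zero =>
      rw [pow_zero]
      exact Submodule.one_le.mpr (Sring R I a).one_mem
    | succ n ih =>
      rw [pow_succ]
      apply Submodule.mul_le.mpr
      intro x hx y hy
      exact (Sring R I a).mul_mem (ih hx) (Algebra.subset_adjoin hy)

lemma sps_mul_toSubmodule {T : Subalgebra R (FractionRing R)} {z w : FractionRing R}
    (hz : z ∈ T) (hw : w ∈ T) (hzw : z * w = 1) :
    sps R z * Subalgebra.toSubmodule T = Subalgebra.toSubmodule T := by
  apply le_antisymm
  · apply Submodule.mul_le.mpr
    intro x hx y hy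
    obtain ⟨r, rfl⟩ := Submodule.mem_span_singleton.mp hx
    rw [smul_mul_assoc]
    exact Submodule.smul_mem _ r (T.mul_mem hz hy)
  · intro y hy
    rw [mem_sps_mul]
    exact ⟨w * y, T.mul_mem hw hy, by rw [← mul_assoc, hzw, one_mul]⟩

lemma red_succ {I : Ideal R} {c : R} {n : ℕ} (h : I ^ (n + 1) = Ideal.span {c} * I ^ n) :
    ∀ j, I ^ (n + j + 1) = Ideal.span {c} * I ^ (n + j) := by
  intro j
  induction j with
  | zero => exact h
  | succ j ih =>
    rw [show n + (j + 1) + 1 = n + j + 1 + 1 by ring, pow_succ, ih, mul_assoc, ← pow_succ,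
      show n + j + 1 = n + (j + 1) by ring]

end RedAuxHelpers

/-- **Lemma 2.2 (2).** For `b ∈ I`, `(b)` is a reduction of `I` iff `b/a` is an invertible
element of `S`; in that case `S = R[I/b]` and `r_Q(I) = r_{(b)}(I)`. -/

theorem reduction_iff_unit_in_S (R : Type*) [CommRing R] [IsLocalRing R] [IsNoetherianRing R]
    (hdim : ringKrullDim R = 1)
    (hCM : ∃ x ∈ maximalIdeal R, x ∈ nonZeroDivisors R)
    (I : Ideal R) (a : R) (hset : CanSetting R I a) (b : R) (hb : b ∈ I) :
    ((∃ n : ℕ, I ^ (n + 1) = Ideal.span {b} * I ^ n) ↔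
      (∃ z : FractionRing R,
        z * algebraMap R (FractionRing R) a = algebraMap R (FractionRing R) b ∧
        z ∈ Sring R I a ∧ ∃ w ∈ Sring R I a, z * w = 1)) ∧
    ((∃ n : ℕ, I ^ (n + 1) = Ideal.span {b} * I ^ n) →
      Sring R I a = Sring R I b ∧
      sInf {n : ℕ | I ^ (n + 1) = Ideal.span {a} * I ^ n} =
        sInf {n : ℕ | I ^ (n + 1) = Ideal.span {b} * I ^ n}) := by
  classical
  set φ := algebraMap R (FractionRing R) with hφdef
  have hφa : IsUnit (φ a) :=
    IsLocalization.map_units (M := nonZeroDivisors R) (FractionRing R) ⟨a, hset.nzd⟩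
  obtain ⟨s, hs⟩ : ∃ s, φ a * s = 1 := hφa.exists_right_inv
  set K := Kfrac R I a with hKdef
  have h1K : (1 : FractionRing R) ∈ K := one_mem_Kfrac hset.mem
  obtain ⟨m0, hm0⟩ := hset.red
  have hstab : K ^ (m0 + 1) = K ^ m0 := by
    have h := (cond_iff I hs a m0).mp hm0
    rwa [hs, sps_one, one_mul] at h
  have hSmod : Subalgebra.toSubmodule (Sring R I a) = K ^ m0 := by
    rw [Smod_eq_iSup I a hset.mem, iSup_pow_eq h1K hstab]
  have h1Km0 : (1 : FractionRing R) ∈ K ^ m0 :=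
    pow_mono h1K (Nat.zero_le m0) (by show _ ∈ K ^ 0; rw [pow_zero]; exact Submodule.one_le.mp le_rfl)
  set z := φ b * s with hzdef
  have hzb : z * φ a = φ b := by
    rw [hzdef, mul_assoc, mul_comm s (φ a), hs, mul_one]
  have hzK : z ∈ K := by
    apply Submodule.subset_span
    exact ⟨b, hb, hzb⟩
  -- forward direction of the iff
  have hfwd : (∃ n : ℕ, I ^ (n + 1) = Ideal.span {b} * I ^ n) →
      z ∈ Sring R I a ∧ ∃ w ∈ Sring R I a, z * w = 1 := by
    rintro ⟨n, hn⟩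
    have hred' : I ^ (n + m0 + 1) = Ideal.span {b} * I ^ (n + m0) := red_succ hn m0
    have hKz : K ^ (n + m0 + 1) = sps R z * K ^ (n + m0) := (cond_iff I hs b (n + m0)).mp hred'
    have hKnm : K ^ (n + m0) = K ^ m0 := by rw [add_comm]; exact pow_stab hstab n
    have hKnm1 : K ^ (n + m0 + 1) = K ^ m0 := by
      rw [show n + m0 + 1 = m0 + (n + 1) by ring]; exact pow_stab hstab (n + 1)
    rw [hKnm, hKnm1] at hKz
    have h1' : (1 : FractionRing R) ∈ sps R z * K ^ m0 := hKz ▸ h1Km0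
    obtain ⟨w, hw, hzw⟩ := mem_sps_mul.mp h1'
    refine ⟨Algebra.subset_adjoin hzK, w, ?_, hzw⟩
    have : w ∈ Subalgebra.toSubmodule (Sring R I a) := hSmod ▸ hw
    exact this
  refine ⟨⟨fun h => ⟨z, hzb, (hfwd h).1, (hfwd h).2⟩, ?_⟩, ?_⟩
  · -- backward direction
    rintro ⟨z', hz'φ, hz'S, w, hwS, hz'w⟩
    have hz'eq : z' = z := by
      rw [hzdef, ← hz'φ, mul_assoc, hs, mul_one]
    subst hz'eq
    refine ⟨m0, ?_⟩
    apply (cond_iff I hs b m0).mpr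
    rw [← hzdef, hstab, ← hSmod]
    exact (sps_mul_toSubmodule hz'S hwS hz'w).symm
  · -- second part
    intro hred
    obtain ⟨hzS, w, hwS, hzw⟩ := hfwd hred
    have hwz : w * z = 1 := by rw [mul_comm]; exact hzw
    -- b maps to a unit
    have hφb : IsUnit (φ b) := by
      rw [← hzb]
      exact IsUnit.mul (⟨⟨z, w, hzw, hwz⟩, rfl⟩ : IsUnit z) hφa
    obtain ⟨sb, hsb⟩ : ∃ sb, φ b * sb = 1 := hφb.exists_right_inv
    set Kb := Kfrac R I b with hKbdef
    have h1Kb : (1 : FractionRing R) ∈ Kb := one_mem_Kfrac hb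
    obtain ⟨n0, hn0⟩ := hred
    have hstabb : Kb ^ (n0 + 1) = Kb ^ n0 := by
      have h := (cond_iff I hsb b n0).mp hn0
      rwa [hsb, sps_one, one_mul] at h
    have hSmodb : Subalgebra.toSubmodule (Sring R I b) = Kb ^ n0 := by
      rw [Smod_eq_iSup I b hb, iSup_pow_eq h1Kb hstabb]
    -- relation between Kb and K
    set y := sb * φ a with hydef
    have hyz : y * z = 1 := by
      rw [hydef, hzdef, show sb * φ a * (φ b * s) = (φ b * sb) * (φ a * s) by ring, hsb, hs,
        one_mul]
    have hzy : z * y = 1 := by rw [mul_comm]; exact hyz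
    have hyw : y = w := by
      calc y = y * (z * w) := by rw [hzw, mul_one]
      _ = (y * z) * w := by ring
      _ = w := by rw [hyz, one_mul]
    have hs' : s * φ a = 1 := by rw [mul_comm]; exact hs
    have hsb' : sb * φ b = 1 := by rw [mul_comm]; exact hsb
    have hyK : sps R y * K = Kb := by
      rw [hKdef, hKbdef, Kfrac_eq hs', Kfrac_eq hsb', ← mul_assoc, sps_mul, hydef,
        show sb * φ a * s = sb * (φ a * s) by ring, hs, mul_one]
    have hKb_eq : ∀ j : ℕ, Kb ^ j = sps R (y ^ j) * K ^ j := by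
      intro j
      rw [← sps_pow, ← mul_pow, hyK]
    -- the scalar y^N is a unit of S
    have hsmul_pow : ∀ j : ℕ, sps R (y ^ j) * Subalgebra.toSubmodule (Sring R I a) =
        Subalgebra.toSubmodule (Sring R I a) := by
      intro j
      refine sps_mul_toSubmodule (w := z ^ j) ?_ (pow_mem hzS j) ?_
      · rw [hyw]; exact pow_mem hwS j
      · rw [← mul_pow, hyz, one_pow]
    constructor
    · -- S = R[I/b]
      apply Subalgebra.toSubmodule_injective
      have e1 : K ^ (m0 + n0) = K ^ m0 := pow_stab hstab n0
      have e2 : Kb ^ (n0 + m0) = Kb ^ n0 := pow_stab hstabb m0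
      rw [hSmod, hSmodb, ← e1, ← e2, add_comm n0 m0, hKb_eq, e1, ← hSmod, hsmul_pow]
    · -- equality of reduction numbers
      have hz_fix : ∀ j : ℕ, sps R (z ^ j) * K ^ m0 = K ^ m0 := by
        intro j
        rw [← hSmod]
        exact sps_mul_toSubmodule (pow_mem hzS j) (pow_mem hwS j)
          (by rw [← mul_pow, hzw, one_pow])
      have hsets : {n : ℕ | I ^ (n + 1) = Ideal.span {a} * I ^ n} =
          {n : ℕ | I ^ (n + 1) = Ideal.span {b} * I ^ n} := by
        ext n
        simp only [Set.mem_setOf_eq]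
        rw [cond_iff I hs a n, cond_iff I hs b n, hs, sps_one, one_mul, ← hzdef, ← hKdef]
        constructor
        · intro h
          have hKn : K ^ n = K ^ m0 := by
            have e1 : K ^ (n + m0) = K ^ n := pow_stab h m0
            have e2 : K ^ (m0 + n) = K ^ m0 := pow_stab hstab n
            rw [← e1, add_comm, e2]
          rw [h, hKn]
          have := hz_fix 1
          rw [pow_one] at this
          exact this.symm
        · intro h
          have hit : ∀ j : ℕ, K ^ (n + j) = sps R (z ^ j) * K ^ n := by
            intro j
            induction j with
            | zero => rw [Nat.add_zero, pow_zero, sps_one, one_mul]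
            | succ j ih =>
              rw [← add_assoc, pow_succ, ih, mul_assoc, ← pow_succ, h, ← mul_assoc, sps_mul,
                mul_comm (z ^ j) z, ← pow_succ']
          have hm : K ^ m0 = sps R (z ^ m0) * K ^ n := by
            rw [← hit m0, add_comm, pow_stab hstab n]
          have hKn : K ^ n = K ^ m0 := by
            refine sps_cancel (x := z ^ m0) (w := w ^ m0)
              (by rw [← mul_pow, hzw, one_pow]) ?_
            rw [← hm, hz_fix m0]
          have hz1 : sps R z * K ^ m0 = K ^ m0 := by
            have h2 := hz_fix 1
            rwa [pow_one] at h2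
          rw [h, hKn]
          exact hz1
      exact congrArg sInf hsets
end

section
/- 𝔠 = R : K if and only if S = K². -/
open IsLocalRing Polynomial

set_option maxHeartbeats 1000000
set_option synthInstance.maxHeartbeats 400000

section auxmain

section aux

variable {R : Type*} [CommRing R] {I : Ideal R} {a : R}

lemma Kfrac_eq_comap :
    Kfrac R I a = Submodule.comap (LinearMap.mulRight R (algebraMap R (FractionRing R) a))
      (Submodule.map (Algebra.linearMap R (FractionRing R)) I) := by
  unfold Kfrac
  have hs : {z : FractionRing R |
      ∃ x ∈ I, z * algebraMap R (FractionRing R) a = algebraMap R (FractionRing R) x}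
      = ↑(Submodule.comap (LinearMap.mulRight R (algebraMap R (FractionRing R) a))
        (Submodule.map (Algebra.linearMap R (FractionRing R)) I)) := by
    ext z
    simp only [Set.mem_setOf_eq, SetLike.mem_coe, Submodule.mem_comap, Submodule.mem_map,
      LinearMap.mulRight_apply, Algebra.linearMap_apply]
    exact ⟨fun ⟨x, hx, h⟩ => ⟨x, hx, h.symm⟩, fun ⟨x, hx, h⟩ => ⟨x, hx, h.symm⟩⟩
  rw [hs, Submodule.span_eq]

lemma mem_Kfrac_iff {z : FractionRing R} :
    z ∈ Kfrac R I a ↔ ∃ x ∈ I, z * algebraMap R (FractionRing R) a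
      = algebraMap R (FractionRing R) x := by
  rw [Kfrac_eq_comap]
  simp only [Submodule.mem_comap, Submodule.mem_map, LinearMap.mulRight_apply,
    Algebra.linearMap_apply]
  exact ⟨fun ⟨x, hx, h⟩ => ⟨x, hx, h.symm⟩, fun ⟨x, hx, h⟩ => ⟨x, hx, h.symm⟩⟩

lemma one_le_Kfrac (haI : a ∈ I) : (1 : Submodule R (FractionRing R)) ≤ Kfrac R I a := by
  rw [Submodule.one_le, mem_Kfrac_iff]
  exact ⟨a, haI, by rw [one_mul]⟩

lemma Kfrac_mul_span (ha : a ∈ nonZeroDivisors R) :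
    Kfrac R I a * Submodule.span R {algebraMap R (FractionRing R) a}
      = Submodule.map (Algebra.linearMap R (FractionRing R)) I := by
  have hu : IsUnit (algebraMap R (FractionRing R) a) :=
    IsLocalization.map_units (FractionRing R) ⟨a, ha⟩
  apply le_antisymm
  · rw [Submodule.mul_le]
    intro z hz y hy
    rw [mem_Kfrac_iff] at hz
    obtain ⟨x, hx, hzx⟩ := hz
    rw [Submodule.mem_span_singleton] at hy
    obtain ⟨r, rfl⟩ := hy
    refine ⟨r * x, I.mul_mem_left r hx, ?_⟩
    rw [Algebra.linearMap_apply, map_mul, Algebra.smul_def, ← hzx]; ring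
  · rintro y ⟨x, hx, rfl⟩
    have h1 : (Algebra.linearMap R (FractionRing R)) x
        = (algebraMap R (FractionRing R) x * ↑hu.unit⁻¹) * algebraMap R (FractionRing R) a := by
      rw [mul_assoc, IsUnit.val_inv_mul, mul_one, Algebra.linearMap_apply]
    rw [h1]
    refine Submodule.mul_mem_mul ?_ (Submodule.mem_span_singleton_self _)
    rw [mem_Kfrac_iff]
    exact ⟨x, hx, by rw [mul_assoc, IsUnit.val_inv_mul, mul_one]⟩

lemma map_lin_mul (M N : Ideal R) :
    Submodule.map (Algebra.linearMap R (FractionRing R)) (M * N)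
      = Submodule.map (Algebra.linearMap R (FractionRing R)) M
        * Submodule.map (Algebra.linearMap R (FractionRing R)) N := by
  have h : Algebra.linearMap R (FractionRing R)
      = (Algebra.ofId R (FractionRing R)).toLinearMap := rfl
  rw [h]
  exact Submodule.map_mul M N (Algebra.ofId R (FractionRing R))

lemma map_lin_pow (n : ℕ) :
    Submodule.map (Algebra.linearMap R (FractionRing R)) (I ^ n)
      = (Submodule.map (Algebra.linearMap R (FractionRing R)) I) ^ n := by
  induction n with
  | zero =>
      rw [pow_zero, pow_zero, Ideal.one_eq_top, Submodule.map_top, Submodule.one_eq_range]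
  | succ n ih => rw [pow_succ, pow_succ, map_lin_mul, ih]

lemma span_unit_mul_inv {u : FractionRing R} (hu : IsUnit u) :
    Submodule.span R {u} * Submodule.span R {(↑hu.unit⁻¹ : FractionRing R)}
      = (1 : Submodule R (FractionRing R)) := by
  rw [Submodule.span_mul_span, Set.singleton_mul_singleton, IsUnit.mul_val_inv,
    ← Submodule.one_eq_span]

lemma mul_span_unit_cancel {u : FractionRing R} (hu : IsUnit u)
    {M N : Submodule R (FractionRing R)}
    (h : M * Submodule.span R {u} = N * Submodule.span R {u}) : M = N := by
  calc M = M * 1 := (Submodule.mul_one M).symm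
    _ = M * (Submodule.span R {u} * Submodule.span R {(↑hu.unit⁻¹ : FractionRing R)}) := by
        rw [span_unit_mul_inv hu]
    _ = (M * Submodule.span R {u}) * Submodule.span R {(↑hu.unit⁻¹ : FractionRing R)} := by
        rw [mul_assoc]
    _ = (N * Submodule.span R {u}) * Submodule.span R {(↑hu.unit⁻¹ : FractionRing R)} := by
        rw [h]
    _ = N * (Submodule.span R {u} * Submodule.span R {(↑hu.unit⁻¹ : FractionRing R)}) := by
        rw [mul_assoc]
    _ = N := by rw [span_unit_mul_inv hu, Submodule.mul_one]

lemma span_singleton_pow_sub (x : FractionRing R) (n : ℕ) :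
    (Submodule.span R {x}) ^ n = Submodule.span R {x ^ n} := by
  induction n with
  | zero => rw [pow_zero, pow_zero, Submodule.one_eq_span]
  | succ n ih =>
      rw [pow_succ, ih, Submodule.span_mul_span, Set.singleton_mul_singleton, pow_succ]

lemma Kpow_mul_span_pow (ha : a ∈ nonZeroDivisors R) (m : ℕ) :
    Kfrac R I a ^ m * Submodule.span R {algebraMap R (FractionRing R) a} ^ m
      = Submodule.map (Algebra.linearMap R (FractionRing R)) (I ^ m) := by
  rw [map_lin_pow, ← Kfrac_mul_span ha, mul_pow]

lemma Kfrac_fg [IsNoetherianRing R] (ha : a ∈ nonZeroDivisors R) : (Kfrac R I a).FG := by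
  have hu : IsUnit (algebraMap R (FractionRing R) a) :=
    IsLocalization.map_units (FractionRing R) ⟨a, ha⟩
  have key : Kfrac R I a = Submodule.map (Algebra.linearMap R (FractionRing R)) I
      * Submodule.span R {(↑hu.unit⁻¹ : FractionRing R)} := by
    calc Kfrac R I a = Kfrac R I a * 1 := (Submodule.mul_one _).symm
      _ = Kfrac R I a * (Submodule.span R {algebraMap R (FractionRing R) a}
            * Submodule.span R {(↑hu.unit⁻¹ : FractionRing R)}) := by
          rw [span_unit_mul_inv hu]
      _ = (Kfrac R I a * Submodule.span R {algebraMap R (FractionRing R) a})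
            * Submodule.span R {(↑hu.unit⁻¹ : FractionRing R)} := by rw [mul_assoc]
      _ = _ := by rw [Kfrac_mul_span ha]
  rw [key]
  exact Submodule.FG.mul ((IsNoetherian.noetherian I).map _) (Submodule.fg_span_singleton _)

lemma Kpow_succ_eq (ha : a ∈ nonZeroDivisors R) {n : ℕ}
    (hred : I ^ (n + 1) = Ideal.span {a} * I ^ n) :
    Kfrac R I a ^ (n + 1) = Kfrac R I a ^ n := by
  have hu : IsUnit (algebraMap R (FractionRing R) a ^ (n + 1)) :=
    (IsLocalization.map_units (FractionRing R) (⟨a, ha⟩ : nonZeroDivisors R)).pow _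
  apply mul_span_unit_cancel hu
  rw [← span_singleton_pow_sub, Kpow_mul_span_pow ha, hred, map_lin_mul]
  have hspan : Submodule.map (Algebra.linearMap R (FractionRing R)) (Ideal.span {a})
      = Submodule.span R {algebraMap R (FractionRing R) a} := by
    rw [Ideal.span, Submodule.map_span, Set.image_singleton, Algebra.linearMap_apply]
  rw [hspan, ← Kpow_mul_span_pow ha n, pow_succ]
  ring

lemma Kpow_eventually_const (ha : a ∈ nonZeroDivisors R) {n : ℕ}
    (hred : I ^ (n + 1) = Ideal.span {a} * I ^ n) :
    ∀ m, Kfrac R I a ^ (n + m) = Kfrac R I a ^ n := by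
  intro m
  induction m with
  | zero => rfl
  | succ m ih =>
      rw [← add_assoc, pow_succ, ih, ← pow_succ, Kpow_succ_eq ha hred]

lemma one_le_Kpow (haI : a ∈ I) (m : ℕ) :
    (1 : Submodule R (FractionRing R)) ≤ Kfrac R I a ^ m := by
  induction m with
  | zero => rw [pow_zero]
  | succ m ih =>
      rw [pow_succ]
      calc (1 : Submodule R (FractionRing R)) = 1 * 1 := (Submodule.mul_one 1).symm
        _ ≤ Kfrac R I a ^ m * 1 := mul_le_mul_left ih _
        _ ≤ Kfrac R I a ^ m * Kfrac R I a := mul_le_mul_right (one_le_Kfrac haI) _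

lemma Kpow_mono (haI : a ∈ I) {i j : ℕ} (hij : i ≤ j) :
    Kfrac R I a ^ i ≤ Kfrac R I a ^ j := by
  obtain ⟨k, rfl⟩ := Nat.exists_eq_add_of_le hij
  rw [pow_add]
  calc Kfrac R I a ^ i = Kfrac R I a ^ i * 1 := (Submodule.mul_one _).symm
    _ ≤ Kfrac R I a ^ i * Kfrac R I a ^ k := mul_le_mul_right (one_le_Kpow haI k) _

lemma Kpow_ge_eq (ha : a ∈ nonZeroDivisors R) {n : ℕ}
    (hred : I ^ (n + 1) = Ideal.span {a} * I ^ n) {i : ℕ} (hi : n ≤ i) :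
    Kfrac R I a ^ i = Kfrac R I a ^ n := by
  obtain ⟨k, rfl⟩ := Nat.exists_eq_add_of_le hi
  exact Kpow_eventually_const ha hred k

lemma Kpow_le_Smod (m : ℕ) : Kfrac R I a ^ m ≤ Smod R I a := by
  induction m with
  | zero =>
      rw [pow_zero, Submodule.one_le]
      exact (Sring R I a).one_mem
  | succ m ih =>
      rw [pow_succ, Submodule.mul_le]
      intro x hx y hy
      exact (Sring R I a).mul_mem (ih hx) (Algebra.subset_adjoin hy)

lemma Smod_eq_pow (ha : a ∈ nonZeroDivisors R) (haI : a ∈ I) {n : ℕ}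
    (hred : I ^ (n + 1) = Ideal.span {a} * I ^ n) :
    Smod R I a = Kfrac R I a ^ (n + 1) := by
  apply le_antisymm
  · show Subalgebra.toSubmodule (Sring R I a) ≤ _
    rw [Sring, Algebra.adjoin_eq_span, Submodule.span_le]
    intro x hx
    refine Submonoid.closure_induction (fun y hy => ?_) ?_ (fun y z _ _ hy hz => ?_) hx
    · exact Kpow_mono haI (Nat.one_le_iff_ne_zero.mpr (Nat.succ_ne_zero n))
        (by rw [pow_one]; exact hy)
    · exact (one_le_Kpow haI (n + 1)) (Submodule.one_le.mp le_rfl)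
    · have e1 : Kfrac R I a ^ (n + 1 + (n + 1)) = Kfrac R I a ^ n :=
        Kpow_ge_eq ha hred (by omega)
      have e2 : Kfrac R I a ^ (n + 1) = Kfrac R I a ^ n :=
        Kpow_ge_eq ha hred (by omega)
      have h2 : Kfrac R I a ^ (n + 1) * Kfrac R I a ^ (n + 1) = Kfrac R I a ^ (n + 1) := by
        rw [← pow_add, e1, e2]
      have h3 : y * z ∈ Kfrac R I a ^ (n + 1) * Kfrac R I a ^ (n + 1) :=
        Submodule.mul_mem_mul hy hz
      rw [h2] at h3
      exact h3
  · exact Kpow_le_Smod (n + 1)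

lemma div_one_eq (K : Submodule R (FractionRing R)) : K / 1 = K := by
  apply le_antisymm
  · intro x hx
    rw [Submodule.mem_div_iff_forall_mul_mem] at hx
    simpa using hx 1 (Submodule.one_le.mp le_rfl)
  · rw [Submodule.le_div_iff_mul_le, Submodule.mul_one]

lemma onediv_eq_div (K S : Submodule R (FractionRing R)) (hKK : K / K = 1)
    (hone : (1 : Submodule R (FractionRing R)) ≤ K) (hKS : K ≤ S) (hSS : S * S ≤ S) :
    (1 : Submodule R (FractionRing R)) / S = K / S := by
  apply le_antisymm
  · intro x hx
    rw [Submodule.mem_div_iff_forall_mul_mem] at hx ⊢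
    exact fun y hy => hone (hx y hy)
  · intro x hx
    rw [Submodule.mem_div_iff_forall_mul_mem] at hx ⊢
    intro y hy
    rw [← hKK, Submodule.mem_div_iff_forall_mul_mem]
    intro z hz
    rw [mul_assoc]
    exact hx _ (hSS (Submodule.mul_mem_mul hy (hKS hz)))

lemma onediv_eq_div_sq (K : Submodule R (FractionRing R)) (hKK : K / K = 1) :
    (1 : Submodule R (FractionRing R)) / K = K / (K * K) := by
  have h1 : (1 : Submodule R (FractionRing R)) / K * K ≤ 1 :=
    Submodule.le_div_iff_mul_le.mp le_rfl
  apply le_antisymm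
  · rw [Submodule.le_div_iff_mul_le, ← mul_assoc]
    calc (1 : Submodule R (FractionRing R)) / K * K * K ≤ 1 * K :=
          mul_le_mul_left h1 _
      _ = K := Submodule.one_mul K
  · rw [Submodule.le_div_iff_mul_le, ← hKK, Submodule.le_div_iff_mul_le, mul_assoc]
    exact Submodule.le_div_iff_mul_le.mp le_rfl

end aux

end auxmain

/-- **Proposition 2.4 (2).** `𝔠 = R : K` if and only if `S = K²`. -/
theorem conductor_eq_colon_iff (R : Type*) [CommRing R] [IsLocalRing R] [IsNoetherianRing R]
    (hdim : ringKrullDim R = 1)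
    (hCM : ∃ x ∈ maximalIdeal R, x ∈ nonZeroDivisors R)
    (I : Ideal R) (a : R) (hset : CanSetting R I a) :
    condS R I a = (1 : Submodule R (FractionRing R)) / Kfrac R I a ↔
      Smod R I a = Kfrac R I a ^ 2 := by
  obtain ⟨n, hred⟩ := hset.red
  have ha := hset.nzd
  have haI := hset.mem
  have hone_fg : (1 : Submodule R (FractionRing R)).FG := by
    rw [Submodule.one_eq_span]; exact Submodule.fg_span_singleton _
  have hone_reg : ∃ z ∈ (1 : Submodule R (FractionRing R)), IsUnit z :=
    ⟨1, Submodule.one_le.mp le_rfl, isUnit_one⟩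
  have hKK : Kfrac R I a / Kfrac R I a = 1 := by
    have h := hset.canonical 1 hone_fg hone_reg
    rwa [div_one_eq] at h
  have hS : Smod R I a = Kfrac R I a ^ (n + 1) := Smod_eq_pow ha haI hred
  have hKfg : (Kfrac R I a).FG := Kfrac_fg ha
  have hSfg : (Smod R I a).FG := by rw [hS]; exact hKfg.pow _
  have hK2fg : ((Kfrac R I a) ^ 2).FG := hKfg.pow 2
  have h1S : (1 : FractionRing R) ∈ Smod R I a :=
    Submodule.one_le.mp (by rw [hS]; exact one_le_Kpow haI (n + 1))
  have hKS : Kfrac R I a ≤ Smod R I a := by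
    have h := Kpow_mono (I := I) (a := a) haI (show 1 ≤ n + 1 by omega)
    rw [pow_one] at h
    rw [hS]; exact h
  have e1 : Kfrac R I a ^ (n + 1 + (n + 1)) = Kfrac R I a ^ n :=
    Kpow_ge_eq ha hred (by omega)
  have e2 : Kfrac R I a ^ (n + 1) = Kfrac R I a ^ n :=
    Kpow_ge_eq ha hred (by omega)
  have hSS : Smod R I a * Smod R I a ≤ Smod R I a := by
    rw [hS]
    exact le_of_eq (by rw [← pow_add, e1, e2])
  have hcond : condS R I a = Kfrac R I a / Smod R I a :=
    onediv_eq_div (Kfrac R I a) (Smod R I a) hKK (one_le_Kfrac haI) hKS hSS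
  have h12 : (1 : Submodule R (FractionRing R)) / Kfrac R I a
      = Kfrac R I a / Kfrac R I a ^ 2 := by
    rw [pow_two]; exact onediv_eq_div_sq (Kfrac R I a) hKK
  constructor
  · intro h
    have hdiv : Kfrac R I a / Smod R I a = Kfrac R I a / Kfrac R I a ^ 2 := by
      rw [← hcond, h, h12]
    calc Smod R I a = Kfrac R I a / (Kfrac R I a / Smod R I a) :=
          (hset.canonical _ hSfg ⟨1, h1S, isUnit_one⟩).symm
      _ = Kfrac R I a / (Kfrac R I a / Kfrac R I a ^ 2) := by rw [hdiv]
      _ = Kfrac R I a ^ 2 :=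
          hset.canonical _ hK2fg ⟨1, Submodule.one_le.mp (one_le_Kpow haI 2), isUnit_one⟩
  · intro h
    rw [hcond, h, ← h12]
end
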